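/- In a conic idempotent residuated lattice, for every element x, both x^ℓ and x^r are conical elements (comparable to every element of the lattice), and both have sign opposite to the sign of x (if x ≤ 1 then 1 ≤ x^ℓ and 1 ≤ x^r; if 1 ≤ x then x^ℓ ≤ 1 and x^r ≤ 1). -/
import Mathlib


/-- In a conic idempotent residuated lattice, `x^ℓ = 1/x` and `x^r = x\1` are conical
elements, and both have sign opposite to the sign of `x`. -/
theorem stmt1 {A : Type*} [Lattice A] [Monoid A]
    (ld rd : A → A → A)
    (resl : ∀ x y z : A, x * y ≤ z ↔ y ≤ ld x z)
    (resr : ∀ x y z : A, x * y ≤ z ↔ x ≤ rd z y)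
    (conic : ∀ a : A, a ≤ 1 ∨ 1 ≤ a)
    (idem : ∀ x : A, x * x = x) :
    ∀ x : A,
      (∀ y : A, rd 1 x ≤ y ∨ y ≤ rd 1 x) ∧
      (∀ y : A, ld x 1 ≤ y ∨ y ≤ ld x 1) ∧
      (x ≤ 1 → 1 ≤ rd 1 x ∧ 1 ≤ ld x 1) ∧
      (1 ≤ x → rd 1 x ≤ 1 ∧ ld x 1 ≤ 1) := by
  -- monotonicity of multiplication
  have mulL : ∀ a b c : A, a ≤ b → c * a ≤ c * b := fun a b c h =>
    (resl c a (c * b)).mpr (h.trans ((resl c b (c * b)).mp le_rfl))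
  have mulR : ∀ a b c : A, a ≤ b → a * c ≤ b * c := fun a b c h =>
    (resr a c (b * c)).mpr (h.trans ((resr b c (b * c)).mp le_rfl))
  -- mixed sign lemmas
  have mixedL : ∀ a b : A, a ≤ 1 → 1 ≤ b → a * b = a ∨ a * b = b := by
    intro a b ha hb
    rcases conic (a * b) with h | h
    · left
      apply le_antisymm
      · calc a * b = a * a * b := by rw [idem]
          _ = a * (a * b) := mul_assoc a a b
          _ ≤ a * 1 := mulL _ _ _ h
          _ = a := mul_one a
      · calc a = a * 1 := (mul_one a).symm
          _ ≤ a * b := mulL _ _ _ hb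
    · right
      apply le_antisymm
      · calc a * b ≤ 1 * b := mulR _ _ _ ha
          _ = b := one_mul b
      · calc b = 1 * b := (one_mul b).symm
          _ ≤ (a * b) * b := mulR _ _ _ h
          _ = a * (b * b) := mul_assoc a b b
          _ = a * b := by rw [idem]
  have mixedR : ∀ a b : A, a ≤ 1 → 1 ≤ b → b * a = a ∨ b * a = b := by
    intro a b ha hb
    rcases conic (b * a) with h | h
    · left
      apply le_antisymm
      · calc b * a = b * (a * a) := by rw [idem]
          _ = (b * a) * a := (mul_assoc b a a).symm
          _ ≤ 1 * a := mulR _ _ _ h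
          _ = a := one_mul a
      · calc a = 1 * a := (one_mul a).symm
          _ ≤ b * a := mulR _ _ _ hb
    · right
      apply le_antisymm
      · calc b * a ≤ b * 1 := mulL _ _ _ ha
          _ = b := mul_one b
      · calc b = b * 1 := (mul_one b).symm
          _ ≤ b * (b * a) := mulL _ _ _ h
          _ = (b * b) * a := (mul_assoc b b a).symm
          _ = b * a := by rw [idem]
  intro x
  -- basic facts about the two residuals
  have rmul : x * ld x 1 ≤ 1 := (resl x (ld x 1) 1).mpr le_rfl
  have lmul : rd 1 x * x ≤ 1 := (resr (rd 1 x) x 1).mpr le_rfl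
  have key_r : ∀ y : A, ld x 1 ≤ y ∨ y ≤ ld x 1 := by
    intro y
    rcases conic x with hx | hx
    · -- x ≤ 1, hence 1 ≤ x\1
      have hr1 : 1 ≤ ld x 1 := (resl x 1 1).mp (by rw [mul_one]; exact hx)
      rcases conic y with hy | hy
      · exact Or.inr (hy.trans hr1)
      · rcases conic (x * y) with hxy | hxy
        · exact Or.inr ((resl x y 1).mp hxy)
        · -- 1 ≤ x*y, so x*y = y
          have hxyy : x * y = y := by
            rcases mixedL x y hx hy with h | h
            · have hx1 : x = 1 := le_antisymm hx (h ▸ hxy)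
              rw [hx1, one_mul]
            · exact h
          left
          have hs1 : 1 ≤ ld x 1 ⊔ y := le_trans hr1 le_sup_left
          have hxs : x * (ld x 1 ⊔ y) = y := by
            apply le_antisymm
            · exact (resl x (ld x 1 ⊔ y) y).mpr
                (sup_le ((resl x (ld x 1) y).mp (rmul.trans hy))
                  ((resl x y y).mp (le_of_eq hxyy)))
            · calc y = x * y := hxyy.symm
                _ ≤ x * (ld x 1 ⊔ y) := mulL _ _ _ le_sup_right
          rcases mixedL x (ld x 1 ⊔ y) hx hs1 with h | h
          · -- x*(r ⊔ y) = x, so y = x = 1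
            have hxy2 : x = y := h.symm.trans hxs
            have hx1 : x = 1 := le_antisymm hx (hxy2 ▸ hy)
            have hr : ld x 1 ≤ 1 := by
              calc ld x 1 = x * ld x 1 := by rw [hx1, one_mul]
                _ ≤ 1 := rmul
            exact hr.trans hy
          · exact le_sup_left.trans (le_of_eq (h.symm.trans hxs))
    · -- 1 ≤ x, hence x\1 ≤ 1
      have hr1 : ld x 1 ≤ 1 := by
        calc ld x 1 = 1 * ld x 1 := (one_mul _).symm
          _ ≤ x * ld x 1 := mulR _ _ _ hx
          _ ≤ 1 := rmul
      rcases conic y with hy | hy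
      · rcases conic (x * y) with hxy | hxy
        · exact Or.inr ((resl x y 1).mp hxy)
        · -- 1 ≤ x*y, so x*y = x
          have hxyx : x * y = x := by
            rcases mixedR y x hy hx with h | h
            · have hy1 : y = 1 := le_antisymm hy (h ▸ hxy)
              rw [hy1, mul_one]
            · exact h
          rcases mixedR (ld x 1) x hr1 hx with hxr | hxr
          · -- x * r = r
            have hyr : y * ld x 1 ≤ 1 := by
              calc y * ld x 1 ≤ y * 1 := mulL _ _ _ hr1
                _ = y := mul_one y
                _ ≤ 1 := hy
            have hkey : x * (y * ld x 1) = ld x 1 := by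
              calc x * (y * ld x 1) = (x * y) * ld x 1 := (mul_assoc x y _).symm
                _ = x * ld x 1 := by rw [hxyx]
                _ = ld x 1 := hxr
            rcases mixedR (y * ld x 1) x hyr hx with h | h
            · -- r = y * r ≤ y
              left
              calc ld x 1 = x * (y * ld x 1) := hkey.symm
                _ = y * ld x 1 := h
                _ ≤ y * 1 := mulL _ _ _ hr1
                _ = y := mul_one y
            · -- r = x, so x ≤ 1, so x*y = x ≤ 1
              have hrx : ld x 1 = x := hkey.symm.trans h
              right
              exact (resl x y 1).mp (by rw [hxyx, ← hrx]; exact hr1)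
          · -- x * r = x : then x ≤ 1, so x*y = x ≤ 1
            right
            exact (resl x y 1).mp (by rw [hxyx, ← hxr]; exact rmul)
      · exact Or.inl (hr1.trans hy)
  have key_l : ∀ y : A, rd 1 x ≤ y ∨ y ≤ rd 1 x := by
    intro y
    rcases conic x with hx | hx
    · -- x ≤ 1, hence 1 ≤ 1/x
      have hl1 : 1 ≤ rd 1 x := (resr 1 x 1).mp (by rw [one_mul]; exact hx)
      rcases conic y with hy | hy
      · exact Or.inr (hy.trans hl1)
      · rcases conic (y * x) with hyx | hyx
        · exact Or.inr ((resr y x 1).mp hyx)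
        · -- 1 ≤ y*x, so y*x = y
          have hyxy : y * x = y := by
            rcases mixedR x y hx hy with h | h
            · have hx1 : x = 1 := le_antisymm hx (h ▸ hyx)
              rw [hx1, mul_one]
            · exact h
          left
          have hs1 : 1 ≤ rd 1 x ⊔ y := le_trans hl1 le_sup_left
          have hxs : (rd 1 x ⊔ y) * x = y := by
            apply le_antisymm
            · exact (resr (rd 1 x ⊔ y) x y).mpr
                (sup_le ((resr (rd 1 x) x y).mp (lmul.trans hy))
                  ((resr y x y).mp (le_of_eq hyxy)))
            · calc y = y * x := hyxy.symm
                _ ≤ (rd 1 x ⊔ y) * x := mulR _ _ _ le_sup_right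
          rcases mixedR x (rd 1 x ⊔ y) hx hs1 with h | h
          · -- (l ⊔ y) * x = x, so y = x = 1
            have hxy2 : x = y := h.symm.trans hxs
            have hx1 : x = 1 := le_antisymm hx (hxy2 ▸ hy)
            have hl : rd 1 x ≤ 1 := by
              calc rd 1 x = rd 1 x * x := by rw [hx1, mul_one]
                _ ≤ 1 := lmul
            exact hl.trans hy
          · exact le_sup_left.trans (le_of_eq (h.symm.trans hxs))
    · -- 1 ≤ x, hence 1/x ≤ 1
      have hl1 : rd 1 x ≤ 1 := by
        calc rd 1 x = rd 1 x * 1 := (mul_one _).symm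
          _ ≤ rd 1 x * x := mulL _ _ _ hx
          _ ≤ 1 := lmul
      rcases conic y with hy | hy
      · rcases conic (y * x) with hyx | hyx
        · exact Or.inr ((resr y x 1).mp hyx)
        · -- 1 ≤ y*x, so y*x = x
          have hyxx : y * x = x := by
            rcases mixedL y x hy hx with h | h
            · have hy1 : y = 1 := le_antisymm hy (h ▸ hyx)
              rw [hy1, one_mul]
            · exact h
          rcases mixedL (rd 1 x) x hl1 hx with hlx | hlx
          · -- l * x = l
            have hly : rd 1 x * y ≤ 1 := by
              calc rd 1 x * y ≤ rd 1 x * 1 := mulL _ _ _ hy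
                _ = rd 1 x := mul_one _
                _ ≤ 1 := hl1
            have hkey : (rd 1 x * y) * x = rd 1 x := by
              calc (rd 1 x * y) * x = rd 1 x * (y * x) := mul_assoc _ y x
                _ = rd 1 x * x := by rw [hyxx]
                _ = rd 1 x := hlx
            rcases mixedL (rd 1 x * y) x hly hx with h | h
            · -- l = l * y ≤ y
              left
              calc rd 1 x = (rd 1 x * y) * x := hkey.symm
                _ = rd 1 x * y := h
                _ ≤ 1 * y := mulR _ _ _ hl1
                _ = y := one_mul y
            · -- l = x, so x ≤ 1, so y*x = x ≤ 1
              have hlxeq : rd 1 x = x := hkey.symm.trans h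
              right
              exact (resr y x 1).mp (by rw [hyxx, ← hlxeq]; exact hl1)
          · -- l * x = x : x ≤ 1, so y*x = x ≤ 1
            right
            exact (resr y x 1).mp (by rw [hyxx, ← hlx]; exact lmul)
      · exact Or.inl (hl1.trans hy)
  refine ⟨key_l, key_r, ?_, ?_⟩
  · intro hx
    exact ⟨(resr 1 x 1).mp (by rw [one_mul]; exact hx),
      (resl x 1 1).mp (by rw [mul_one]; exact hx)⟩
  · intro hx
    constructor
    · calc rd 1 x = rd 1 x * 1 := (mul_one _).symm
        _ ≤ rd 1 x * x := mulL _ _ _ hx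
        _ ≤ 1 := lmul
    · calc ld x 1 = 1 * ld x 1 := (one_mul _).symm
        _ ≤ x * ld x 1 := mulR _ _ _ hx
        _ ≤ 1 := rmul
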